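/- If A is quotiented w.r.t. backward simulation (A = A/⊑^bw), then pruning with (strict backward simulation, direct trace inclusion) is good for pruning: removing every transition (p,σ,r) such that some transition (p',σ,r') exists with p strictly backward-simulated by p' and r ⊑di r' preserves the language. -/
import Mathlib


/-- A (nondeterministic) Büchi automaton over alphabet `σ` with state space `Q`. -/
structure BA (σ Q : Type) where
  I : Set Q
  F : Set Q
  δ : Q → σ → Q → Prop

namespace BA
variable {σ Q : Type}

def InfTrace (A : BA σ Q) (w : ℕ → σ) (ρ : ℕ → Q) : Prop :=
  ∀ i, A.δ (ρ i) (w i) (ρ (i + 1))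

def Fair (A : BA σ Q) (ρ : ℕ → Q) : Prop :=
  ∀ n, ∃ m, n ≤ m ∧ ρ m ∈ A.F

def Lang (A : BA σ Q) : Set (ℕ → σ) :=
  {w | ∃ ρ, A.InfTrace w ρ ∧ ρ 0 ∈ A.I ∧ A.Fair ρ}

/-- Direct trace inclusion: every infinite trace from `p` is matched by an infinite
trace from `q` on the same word, preserving accepting positions. -/
def diIncl (A : BA σ Q) (p q : Q) : Prop :=
  ∀ (w : ℕ → σ) (ρ : ℕ → Q),
    A.InfTrace w ρ → ρ 0 = p →
    ∃ ρ', A.InfTrace w ρ' ∧ ρ' 0 = q ∧ ∀ i, ρ i ∈ A.F → ρ' i ∈ A.F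

/-- `S` is a backward simulation. -/
def IsBwSim (A : BA σ Q) (S : Q → Q → Prop) : Prop :=
  ∀ p q, S p q → (p ∈ A.F → q ∈ A.F) ∧ (p ∈ A.I → q ∈ A.I) ∧
    ∀ a p', A.δ p' a p → ∃ q', A.δ q' a q ∧ S p' q'

/-- Backward simulation: the largest backward simulation relation. -/
def bwSim (A : BA σ Q) (p q : Q) : Prop :=
  ∃ S, IsBwSim A S ∧ S p q

/-- Strict backward simulation `⊑^bw ∖ (⊑^bw)⁻¹`. -/
def bwSimStrict (A : BA σ Q) (p q : Q) : Prop :=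
  bwSim A p q ∧ ¬ bwSim A q p

end BA

/-- Pruning with `P(≺^bw, ⊑di)`: simultaneously remove every transition `(p,σ,r)` such
that some transition `(p',σ,r')` exists with `p ≺^bw p'` and `r ⊑di r'`. -/
def pruneBwSimDiIncl {σ Q : Type} (A : BA σ Q) : BA σ Q where
  I := A.I
  F := A.F
  δ := fun p a r => A.δ p a r ∧
    ¬ ∃ p' r', A.δ p' a r' ∧ A.bwSimStrict p p' ∧ A.diIncl r r'

namespace BA
variable {σ Q : Type}

-- auxiliary lemmas
lemma bwSim_refl (A : BA σ Q) (p : Q) : A.bwSim p p :=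
  ⟨Eq, fun x y h => h ▸ ⟨id, id, fun a p' hp' => ⟨p', hp', rfl⟩⟩, rfl⟩

lemma isBwSim_bwSim (A : BA σ Q) : A.IsBwSim A.bwSim := by
  rintro p q ⟨S, hS, hpq⟩
  obtain ⟨hF, hI, hδ⟩ := hS p q hpq
  exact ⟨hF, hI, fun a p' h =>
    let ⟨q', hq', hS'⟩ := hδ a p' h; ⟨q', hq', ⟨S, hS, hS'⟩⟩⟩

lemma bwSim_trans (A : BA σ Q) {p m q : Q} (h1 : A.bwSim p m) (h2 : A.bwSim m q) :
    A.bwSim p q := by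
  refine ⟨fun x y => ∃ z, A.bwSim x z ∧ A.bwSim z y, ?_, m, h1, h2⟩
  rintro x y ⟨z, hxz, hzy⟩
  obtain ⟨hF1, hI1, hδ1⟩ := A.isBwSim_bwSim x z hxz
  obtain ⟨hF2, hI2, hδ2⟩ := A.isBwSim_bwSim z y hzy
  refine ⟨fun h => hF2 (hF1 h), fun h => hI2 (hI1 h), ?_⟩
  intro a x' hx'
  obtain ⟨z', hz', hxz'⟩ := hδ1 a x' hx'
  obtain ⟨y', hy', hzy'⟩ := hδ2 a z' hz'
  exact ⟨y', hy', z', hxz', hzy'⟩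

lemma bwSim_F (A : BA σ Q) {p q : Q} (h : A.bwSim p q) (hp : p ∈ A.F) : q ∈ A.F :=
  (A.isBwSim_bwSim p q h).1 hp

lemma bwSim_I (A : BA σ Q) {p q : Q} (h : A.bwSim p q) (hp : p ∈ A.I) : q ∈ A.I :=
  (A.isBwSim_bwSim p q h).2.1 hp

open Classical in
noncomputable def rank (A : BA σ Q) [Fintype Q] (q : Q) : ℕ :=
  (Finset.univ.filter (fun x => A.bwSim x q)).card

noncomputable def key (A : BA σ Q) [Fintype Q] (q : Q) : ℕ :=
  A.rank q * (Fintype.card Q + 1) + (Fintype.equivFin Q q : ℕ)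

variable [Fintype Q]

lemma rank_le (A : BA σ Q) {p q : Q} (h : A.bwSim p q) : A.rank p ≤ A.rank q := by
  classical
  apply Finset.card_le_card
  intro x hx
  simp only [rank, Finset.mem_filter, Finset.mem_univ, true_and] at hx ⊢
  exact A.bwSim_trans hx h

lemma rank_lt (A : BA σ Q) (hquot : ∀ x y, A.bwSim x y → A.bwSim y x → x = y)
    {p q : Q} (h : A.bwSim p q) (hne : p ≠ q) : A.rank p < A.rank q := by
  classical
  apply Finset.card_lt_card
  constructor
  · intro x hx
    simp only [rank, Finset.mem_filter, Finset.mem_univ, true_and] at hx ⊢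
    exact A.bwSim_trans hx h
  · intro hsub
    have hq : q ∈ Finset.univ.filter (fun x => A.bwSim x q) := by
      simp [A.bwSim_refl q]
    have := hsub hq
    simp only [Finset.mem_filter, Finset.mem_univ, true_and] at this
    exact hne (hquot p q h this)

lemma key_lt_of_rank_lt (A : BA σ Q) {p q : Q} (h : A.rank p < A.rank q) :
    A.key p < A.key q := by
  have h1 : (Fintype.equivFin Q p : ℕ) < Fintype.card Q + 1 :=
    Nat.lt_succ_of_lt (Fintype.equivFin Q p).2
  have : A.key p < (A.rank p + 1) * (Fintype.card Q + 1) := by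
    unfold key; nlinarith
  calc A.key p < (A.rank p + 1) * (Fintype.card Q + 1) := this
    _ ≤ A.rank q * (Fintype.card Q + 1) := Nat.mul_le_mul_right _ h
    _ ≤ A.key q := Nat.le_add_right _ _

lemma key_le (A : BA σ Q) (hquot : ∀ x y, A.bwSim x y → A.bwSim y x → x = y)
    {p q : Q} (h : A.bwSim p q) : A.key p ≤ A.key q := by
  by_cases hpq : p = q
  · subst hpq; exact le_rfl
  · exact (A.key_lt_of_rank_lt (A.rank_lt hquot h hpq)).le

lemma key_injective (A : BA σ Q) : Function.Injective A.key := by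
  intro p q h
  have h1 : (Fintype.equivFin Q p : ℕ) < Fintype.card Q + 1 :=
    Nat.lt_succ_of_lt (Fintype.equivFin Q p).2
  have h2 : (Fintype.equivFin Q q : ℕ) < Fintype.card Q + 1 :=
    Nat.lt_succ_of_lt (Fintype.equivFin Q q).2
  have hr : A.rank p = A.rank q := by
    rcases lt_trichotomy (A.rank p) (A.rank q) with hlt | heq | hgt
    · exact absurd h (A.key_lt_of_rank_lt hlt).ne
    · exact heq
    · exact absurd h.symm (A.key_lt_of_rank_lt hgt).ne
  have he : (Fintype.equivFin Q p : ℕ) = (Fintype.equivFin Q q : ℕ) := by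
    unfold key at h; rw [hr] at h; omega
  exact (Fintype.equivFin Q).injective (Fin.val_injective he)

/-- Backward-simulation prefix replacement. -/
lemma bw_prefix (A : BA σ Q) (w : ℕ → σ) (ρ : ℕ → Q) :
    ∀ (i : ℕ), (∀ j < i, A.δ (ρ j) (w j) (ρ (j + 1))) →
    ∀ p', A.bwSim (ρ i) p' →
    ∃ τ : ℕ → Q, τ i = p' ∧ (∀ j < i, A.δ (τ j) (w j) (τ (j + 1))) ∧
      ∀ j ≤ i, A.bwSim (ρ j) (τ j) := by
  intro i
  induction i with
  | zero =>
    intro _ p' hp'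
    exact ⟨fun _ => p', rfl, fun j hj => absurd hj (Nat.not_lt_zero j),
      fun j hj => by interval_cases j; exact hp'⟩
  | succ i ih =>
    intro hδ p' hp'
    obtain ⟨q', hq'δ, hq'sim⟩ :=
      (A.isBwSim_bwSim (ρ (i + 1)) p' hp').2.2 (w i) (ρ i) (hδ i (Nat.lt_succ_self i))
    obtain ⟨τ, hτi, hτδ, hτsim⟩ := ih (fun j hj => hδ j (Nat.lt_succ_of_lt hj)) q' hq'sim
    refine ⟨fun j => if j ≤ i then τ j else p', ?_, ?_, ?_⟩
    · show (if i + 1 ≤ i then τ (i + 1) else p') = p'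
      rw [if_neg (by omega)]
    · intro j hj
      show A.δ (if j ≤ i then τ j else p') (w j) (if j + 1 ≤ i then τ (j + 1) else p')
      by_cases hji : j < i
      · rw [if_pos hji.le, if_pos (show j + 1 ≤ i from hji)]
        exact hτδ j hji
      · have hji' : j = i := by omega
        subst hji'
        rw [if_pos le_rfl, if_neg (by omega), hτi]
        exact hq'δ
    · intro j hj
      show A.bwSim (ρ j) (if j ≤ i then τ j else p')
      by_cases hji : j ≤ i
      · rw [if_pos hji]; exact hτsim j hji
      · have hji' : j = i + 1 := by omega
        subst hji'
        rw [if_neg (by omega)]; exact hp'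

end BA

section Greedy
variable {Q : Type} [Fintype Q] (key : Q → ℕ) (P : (ℕ → Q) → Prop)

lemma greedy_exists (k : ℕ) (ρ : ℕ → Q) (h : P ρ) :
    ∃ ρ'', P ρ'' ∧ (∀ j < k, ρ'' j = ρ j) ∧
      ∀ ρ', P ρ' → (∀ j < k, ρ' j = ρ j) → key (ρ' k) ≤ key (ρ'' k) := by
  classical
  set T : Finset Q :=
    Finset.univ.filter (fun q => ∃ ρ', P ρ' ∧ (∀ j < k, ρ' j = ρ j) ∧ ρ' k = q) with hT
  have hmem : ∀ q : Q, q ∈ T ↔ ∃ ρ', P ρ' ∧ (∀ j < k, ρ' j = ρ j) ∧ ρ' k = q := by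
    intro q
    rw [hT, Finset.mem_filter]
    simp only [Finset.mem_univ, true_and]
  have hne : T.Nonempty := ⟨ρ k, (hmem (ρ k)).mpr ⟨ρ, h, fun _ _ => rfl, rfl⟩⟩
  obtain ⟨q, hq, hmax⟩ := T.exists_max_image key hne
  obtain ⟨ρ'', hρ'', hag, hk⟩ := (hmem q).mp hq
  refine ⟨ρ'', hρ'', hag, fun ρ' hρ' hag' => ?_⟩
  rw [hk]
  exact hmax _ ((hmem (ρ' k)).mpr ⟨ρ', hρ', hag', rfl⟩)

noncomputable def greedyAux (ρ0 : ℕ → Q) (h0 : P ρ0) : ℕ → {ρ : ℕ → Q // P ρ}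
  | 0 => ⟨(greedy_exists key P 0 ρ0 h0).choose, (greedy_exists key P 0 ρ0 h0).choose_spec.1⟩
  | k + 1 =>
    let prev := greedyAux ρ0 h0 k
    ⟨(greedy_exists key P (k + 1) prev.1 prev.2).choose,
     (greedy_exists key P (k + 1) prev.1 prev.2).choose_spec.1⟩

lemma greedyAux_agree (ρ0 : ℕ → Q) (h0 : P ρ0) (k : ℕ) :
    ∀ j < k + 1, (greedyAux key P ρ0 h0 (k + 1)).1 j = (greedyAux key P ρ0 h0 k).1 j := by
  have := (greedy_exists key P (k + 1) (greedyAux key P ρ0 h0 k).1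
    (greedyAux key P ρ0 h0 k).2).choose_spec.2.1
  exact this

lemma greedyAux_max (ρ0 : ℕ → Q) (h0 : P ρ0) (k : ℕ) :
    ∀ ρ', P ρ' → (∀ j < k, ρ' j = (if hk : k = 0 then ρ0 else
      (greedyAux key P ρ0 h0 (k - 1)).1) j) →
      key (ρ' k) ≤ key ((greedyAux key P ρ0 h0 k).1 k) := by
  cases k with
  | zero =>
    intro ρ' hρ' _
    exact (greedy_exists key P 0 ρ0 h0).choose_spec.2.2 ρ' hρ' (fun j hj => by omega)
  | succ k =>
    intro ρ' hρ' hag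
    simp only [Nat.succ_ne_zero, dif_neg, Nat.succ_sub_one] at hag
    exact (greedy_exists key P (k + 1) (greedyAux key P ρ0 h0 k).1
      (greedyAux key P ρ0 h0 k).2).choose_spec.2.2 ρ' hρ' hag

lemma exists_greedy (ρ0 : ℕ → Q) (h0 : P ρ0) :
    ∃ g : ℕ → Q, (∀ k, ∃ ρ, P ρ ∧ ∀ j ≤ k, ρ j = g j) ∧
      ∀ (k : ℕ) (ρ' : ℕ → Q), P ρ' → (∀ j < k, ρ' j = g j) → key (ρ' k) ≤ key (g k) := by
  set g : ℕ → Q := fun j => (greedyAux key P ρ0 h0 j).1 j with hg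
  have hagree : ∀ k, ∀ j ≤ k, (greedyAux key P ρ0 h0 k).1 j = g j := by
    intro k
    induction k with
    | zero => intro j hj; interval_cases j; rfl
    | succ k ih =>
      intro j hj
      rcases Nat.lt_succ_iff_lt_or_eq.mp (Nat.lt_succ_of_le hj) with hj' | hj'
      · rw [greedyAux_agree key P ρ0 h0 k j (by omega)]
        exact ih j (by omega)
      · subst hj'; rfl
  refine ⟨g, fun k => ⟨(greedyAux key P ρ0 h0 k).1, (greedyAux key P ρ0 h0 k).2,
    hagree k⟩, ?_⟩
  intro k ρ' hρ' hag
  have := greedyAux_max key P ρ0 h0 k ρ' hρ' ?_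
  · exact this
  · intro j hj
    cases k with
    | zero => omega
    | succ k =>
      simp only [Nat.succ_ne_zero, dif_neg, Nat.succ_sub_one]
      rw [hag j hj]
      exact (hagree k j (by omega)).symm

end Greedy

/-- If `A` is already quotiented w.r.t. backward simulation (no two distinct states are
backward-simulation equivalent), then pruning with (strict backward simulation, direct
trace inclusion) is good for pruning: the pruned automaton has the same language. -/
theorem prune_bwSimStrict_diIncl_GFP {σ Q : Type} [Fintype Q] (A : BA σ Q)
    (hquot : ∀ x y, A.bwSim x y → A.bwSim y x → x = y) :
    (pruneBwSimDiIncl A).Lang = A.Lang := by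
  classical
  apply Set.eq_of_subset_of_subset
  · rintro w ⟨ρ, hT, hI, hF⟩
    exact ⟨ρ, fun i => (hT i).1, hI, hF⟩
  · rintro w ⟨ρ0, hT0, hI0, hF0⟩
    obtain ⟨g, hglim, hgmax⟩ := exists_greedy A.key
      (fun ρ => A.InfTrace w ρ ∧ ρ 0 ∈ A.I ∧ ∀ i, ρ0 i ∈ A.F → ρ i ∈ A.F)
      ρ0 ⟨hT0, hI0, fun _ h => h⟩
    have hgT : A.InfTrace w g := by
      intro j
      obtain ⟨ρ, hρ, hag⟩ := hglim (j + 1)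
      rw [← hag j (by omega), ← hag (j + 1) le_rfl]
      exact hρ.1 j
    have hgI : g 0 ∈ A.I := by
      obtain ⟨ρ, hρ, hag⟩ := hglim 0
      rw [← hag 0 le_rfl]
      exact hρ.2.1
    have hgF : ∀ i, ρ0 i ∈ A.F → g i ∈ A.F := by
      intro i hi
      obtain ⟨ρ, hρ, hag⟩ := hglim i
      rw [← hag i le_rfl]
      exact hρ.2.2 i hi
    refine ⟨g, ?_, hgI, ?_⟩
    · -- g is a trace of the pruned automaton
      intro i
      refine ⟨hgT i, ?_⟩
      rintro ⟨p', r', hδ', hstrict, hdi⟩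
      -- prefix replacement using backward simulation
      obtain ⟨τ, hτi, hτδ, hτsim⟩ :=
        A.bw_prefix w g i (fun j _ => hgT j) p' hstrict.1
      -- suffix replacement using direct trace inclusion
      obtain ⟨s, hsT, hs0, hsF⟩ := hdi (fun m => w (i + 1 + m)) (fun m => g (i + 1 + m))
        (fun m => by
          have h := hgT (i + 1 + m)
          have e : i + 1 + m + 1 = i + 1 + (m + 1) := by omega
          rw [e] at h
          exact h) rfl
      set ρ' : ℕ → Q := fun j => if j ≤ i then τ j else s (j - (i + 1)) with hρ'def
      have hρ'le : ∀ j, j ≤ i → ρ' j = τ j := fun j hj => if_pos hj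
      have hρ'gt : ∀ j, i < j → ρ' j = s (j - (i + 1)) := fun j hj => if_neg (by omega)
      have hP' : A.InfTrace w ρ' ∧ ρ' 0 ∈ A.I ∧ ∀ m, ρ0 m ∈ A.F → ρ' m ∈ A.F := by
        refine ⟨?_, ?_, ?_⟩
        · intro j
          rcases lt_trichotomy j i with hj | hj | hj
          · rw [hρ'le j hj.le, hρ'le (j + 1) (by omega)]
            exact hτδ j hj
          · subst hj
            rw [hρ'le j le_rfl, hρ'gt (j + 1) (by omega), hτi]
            have e0 : j + 1 - (j + 1) = 0 := by omega
            rw [e0, hs0]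
            exact hδ'
          · rw [hρ'gt j hj, hρ'gt (j + 1) (by omega)]
            have e1 : j + 1 - (i + 1) = (j - (i + 1)) + 1 := by omega
            rw [e1]
            have e2 : w j = w (i + 1 + (j - (i + 1))) := by congr 1; omega
            rw [e2]
            exact hsT (j - (i + 1))
        · rw [hρ'le 0 (by omega)]
          exact A.bwSim_I (hτsim 0 (by omega)) hgI
        · intro m hm
          have hgm : g m ∈ A.F := hgF m hm
          by_cases hmi : m ≤ i
          · rw [hρ'le m hmi]
            exact A.bwSim_F (hτsim m hmi) hgm
          · rw [hρ'gt m (by omega)]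
            apply hsF
            show g (i + 1 + (m - (i + 1))) ∈ A.F
            have e : i + 1 + (m - (i + 1)) = m := by omega
            rw [e]
            exact hgm
      -- ρ' is strictly better than g at position i : contradiction with maximality
      have hρ'i : ρ' i = p' := by rw [hρ'le i le_rfl, hτi]
      have hkey_i : A.key (g i) < A.key (ρ' i) := by
        rw [hρ'i]
        apply A.key_lt_of_rank_lt
        apply A.rank_lt hquot hstrict.1
        intro hEq
        exact hstrict.2 (hEq ▸ A.bwSim_refl (g i))
      have hdiff : ρ' i ≠ g i := by
        intro h
        rw [h] at hkey_i
        exact lt_irrefl _ hkey_i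
      have hne : ∃ k, ρ' k ≠ g k := ⟨i, hdiff⟩
      have hkne : ρ' (Nat.find hne) ≠ g (Nat.find hne) := Nat.find_spec hne
      have hki : Nat.find hne ≤ i := Nat.find_min' hne hdiff
      have hksim : A.bwSim (g (Nat.find hne)) (ρ' (Nat.find hne)) := by
        rw [hρ'le _ hki]
        exact hτsim _ hki
      have h1 : A.key (ρ' (Nat.find hne)) ≤ A.key (g (Nat.find hne)) :=
        hgmax (Nat.find hne) ρ' hP'
          (fun j hj => not_not.mp (Nat.find_min hne hj))
      have h2 : A.key (g (Nat.find hne)) ≤ A.key (ρ' (Nat.find hne)) :=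
        A.key_le hquot hksim
      exact hkne (A.key_injective (le_antisymm h1 h2))
    · -- fairness
      intro n
      obtain ⟨m, hm1, hm2⟩ := hF0 n
      exact ⟨m, hm1, hgF m hm2⟩
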